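/- Let A = (A_1,...,A_m) and B = (B_1,...,B_m) be commuting m-tuples of N×N complex matrices, and suppose A is k-cyclic with respect to U = (u_1,...,u_k) (i.e., the vectors Σ_j p_j(A)u_j span ℂ^N). Then B is simultaneously similar to A if and only if there exists a cyclic k-tuple V = (v_1,...,v_k) for B such that for all polynomials p_1,...,p_k ∈ ℂ[z_1,...,z_m], Σ_j p_j(A)u_j = 0 ⟺ Σ_j p_j(B)v_j = 0. -/
import Mathlib


/-- Polynomial functional calculus for a tuple of `N × N` matrices:
`p(A) = Σ_d coeff_d • A₁^{d₁} ⋯ A_m^{d_m}`. -/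
noncomputable def evalM {m N : ℕ} (A : Fin m → Matrix (Fin N) (Fin N) ℂ)
    (p : MvPolynomial (Fin m) ℂ) : Matrix (Fin N) (Fin N) ℂ :=
  ∑ d ∈ p.support, p.coeff d • ((List.finRange m).map fun i => A i ^ d i).prod

lemma evalM_hom {m N : ℕ} (A : Fin m → Matrix (Fin N) (Fin N) ℂ)
    (hA : ∀ i j, A i * A j = A j * A i) :
    ∃ φ : MvPolynomial (Fin m) ℂ →ₐ[ℂ] Matrix (Fin N) (Fin N) ℂ,
      (∀ i, φ (MvPolynomial.X i) = A i) ∧ ∀ p, evalM A p = φ p := by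
  classical
  have hcomm : ∀ a ∈ Set.range A, ∀ b ∈ Set.range A, a * b = b * a := by
    rintro _ ⟨i, rfl⟩ _ ⟨j, rfl⟩; exact hA i j
  set T := Algebra.adjoin ℂ (Set.range A) with hT
  letI : CommRing T := { (inferInstance : Ring T) with
    mul_comm := (Algebra.adjoinCommRingOfComm ℂ hcomm).mul_comm }
  let a : Fin m → T := fun i => ⟨A i, Algebra.subset_adjoin ⟨i, rfl⟩⟩
  refine ⟨T.val.comp (MvPolynomial.aeval a), ?_, ?_⟩
  · intro i; simp [a]
  · intro p
    rw [evalM, AlgHom.comp_apply, MvPolynomial.aeval_def, MvPolynomial.eval₂_eq', map_sum]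
    refine Finset.sum_congr rfl fun d _ => ?_
    rw [map_mul]
    have h1 : T.val ((algebraMap ℂ T) (p.coeff d)) = p.coeff d • (1 : Matrix (Fin N) (Fin N) ℂ) := by
      simp [Algebra.algebraMap_eq_smul_one]
    have h2 : T.val (∏ i, a i ^ d i) =
        ((List.finRange m).map fun i => A i ^ d i).prod := by
      rw [Fin.prod_univ_def, map_list_prod, List.map_map]
      congr 1
    rw [h1, h2, smul_mul_assoc, one_mul]

lemma mulVec_sum' {N k : ℕ} (M : Matrix (Fin N) (Fin N) ℂ) (v : Fin k → (Fin N → ℂ)) :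
    M.mulVec (∑ j, v j) = ∑ j, M.mulVec (v j) := by
  simpa only [Matrix.mulVecLin_apply] using map_sum (Matrix.mulVecLin M) v Finset.univ

theorem stmt6 {m N k : ℕ}
    (A B : Fin m → Matrix (Fin N) (Fin N) ℂ)
    (hA : ∀ i j, A i * A j = A j * A i) (hB : ∀ i j, B i * B j = B j * B i)
    (u : Fin k → (Fin N → ℂ))
    (hu : {x : Fin N → ℂ | ∃ p : Fin k → MvPolynomial (Fin m) ℂ,
        x = ∑ j, (evalM A (p j)).mulVec (u j)} = Set.univ) :
    (∃ S : Matrix (Fin N) (Fin N) ℂ, IsUnit S ∧ ∀ j, B j = S * A j * S⁻¹) ↔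
    ∃ v : Fin k → (Fin N → ℂ),
      {x : Fin N → ℂ | ∃ p : Fin k → MvPolynomial (Fin m) ℂ,
          x = ∑ j, (evalM B (p j)).mulVec (v j)} = Set.univ ∧
      ∀ p : Fin k → MvPolynomial (Fin m) ℂ,
        (∑ j, (evalM A (p j)).mulVec (u j) = 0 ↔ ∑ j, (evalM B (p j)).mulVec (v j) = 0) := by
  classical
  obtain ⟨φA, hφAX, hφA⟩ := evalM_hom A hA
  obtain ⟨φB, hφBX, hφB⟩ := evalM_hom B hB
  constructor
  · rintro ⟨S, hS, hBj⟩
    have hdet := (Matrix.isUnit_iff_isUnit_det S).1 hS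
    have h1 : S * S⁻¹ = 1 := Matrix.mul_nonsing_inv S hdet
    have h2 : S⁻¹ * S = 1 := Matrix.nonsing_inv_mul S hdet
    have hconj : ∀ p, evalM B p = S * evalM A p * S⁻¹ := by
      let e : Matrix (Fin N) (Fin N) ℂ →ₐ[ℂ] Matrix (Fin N) (Fin N) ℂ :=
        { toFun := fun x => S * x * S⁻¹
          map_one' := by show S * 1 * S⁻¹ = 1; rw [mul_one, h1]
          map_mul' := fun x y => by
            show S * (x * y) * S⁻¹ = S * x * S⁻¹ * (S * y * S⁻¹)
            simp only [Matrix.mul_assoc]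
            rw [← Matrix.mul_assoc S⁻¹ S, h2, one_mul]
          map_zero' := by simp
          map_add' := fun x y => by noncomm_ring
          commutes' := fun c => by
            simp [Algebra.algebraMap_eq_smul_one, mul_smul_comm, smul_mul_assoc, h1] }
      have he : φB = e.comp φA :=
        MvPolynomial.algHom_ext fun i => by simp [e, hφAX, hφBX, hBj]
      intro p; rw [hφB, he]; simp [e, hφA]
    have key : ∀ p : Fin k → MvPolynomial (Fin m) ℂ,
        ∑ j, (evalM B (p j)).mulVec (S.mulVec (u j)) =
          S.mulVec (∑ j, (evalM A (p j)).mulVec (u j)) := by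
      intro p
      rw [mulVec_sum']
      refine Finset.sum_congr rfl fun j _ => ?_
      rw [Matrix.mulVec_mulVec, Matrix.mulVec_mulVec, hconj,
        Matrix.mul_assoc _ S⁻¹ S, h2, mul_one]
    refine ⟨fun j => S.mulVec (u j), ?_, ?_⟩
    · apply Set.eq_univ_of_forall
      intro x
      have hx : S⁻¹.mulVec x ∈ (Set.univ : Set (Fin N → ℂ)) := trivial
      rw [← hu] at hx
      obtain ⟨p, hp⟩ := hx
      refine ⟨p, ?_⟩
      rw [key, ← hp, Matrix.mulVec_mulVec, h1, Matrix.one_mulVec]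
    · intro p
      rw [key]
      constructor
      · intro h; rw [h, Matrix.mulVec_zero]
      · intro h
        have := congrArg (S⁻¹.mulVec ·) h
        simpa [Matrix.mulVec_mulVec, h2, Matrix.one_mulVec, Matrix.mulVec_zero] using this
  · rintro ⟨v, hv, hiff⟩
    let f : (Fin k → MvPolynomial (Fin m) ℂ) →ₗ[ℂ] (Fin N → ℂ) :=
      { toFun := fun p => ∑ j, (φA (p j)).mulVec (u j)
        map_add' := fun p q => by
          simp [map_add, Matrix.add_mulVec, Finset.sum_add_distrib]
        map_smul' := fun c p => by
          simp [map_smul, Matrix.smul_mulVec, Finset.smul_sum] }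
    let g : (Fin k → MvPolynomial (Fin m) ℂ) →ₗ[ℂ] (Fin N → ℂ) :=
      { toFun := fun p => ∑ j, (φB (p j)).mulVec (v j)
        map_add' := fun p q => by
          simp [map_add, Matrix.add_mulVec, Finset.sum_add_distrib]
        map_smul' := fun c p => by
          simp [map_smul, Matrix.smul_mulVec, Finset.smul_sum] }
    have hfs : Function.Surjective f := by
      intro x
      have hx : x ∈ (Set.univ : Set (Fin N → ℂ)) := trivial
      rw [← hu] at hx
      obtain ⟨p, hp⟩ := hx
      exact ⟨p, by simp only [f, LinearMap.coe_mk, AddHom.coe_mk, ← hφA]; exact hp.symm⟩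
    have hgs : Function.Surjective g := by
      intro x
      have hx : x ∈ (Set.univ : Set (Fin N → ℂ)) := trivial
      rw [← hv] at hx
      obtain ⟨p, hp⟩ := hx
      exact ⟨p, by simp only [g, LinearMap.coe_mk, AddHom.coe_mk, ← hφB]; exact hp.symm⟩
    have hker : ∀ p, f p = 0 ↔ g p = 0 := by
      intro p
      have := hiff p
      simp only [hφA, hφB] at this
      exact this
    obtain ⟨σf, hσf⟩ := f.exists_rightInverse_of_surjective (LinearMap.range_eq_top.2 hfs)
    obtain ⟨σg, hσg⟩ := g.exists_rightInverse_of_surjective (LinearMap.range_eq_top.2 hgs)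
    let Sl := g ∘ₗ σf
    let Tl := f ∘ₗ σg
    have hSf : ∀ p, Sl (f p) = g p := by
      intro p
      have h0 : f (σf (f p)) = f p := by
        have := congrArg (fun h => h (f p)) (congrArg DFunLike.coe hσf)
        simpa using this
      have h1 : f (σf (f p) - p) = 0 := by rw [map_sub, h0, sub_self]
      have h2 := (hker _).1 h1
      rw [map_sub, sub_eq_zero] at h2
      exact h2
    have hTg : ∀ p, Tl (g p) = f p := by
      intro p
      have h0 : g (σg (g p)) = g p := by
        have := congrArg (fun h => h (g p)) (congrArg DFunLike.coe hσg)
        simpa using this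
      have h1 : g (σg (g p) - p) = 0 := by rw [map_sub, h0, sub_self]
      have h2 := (hker _).2 h1
      rw [map_sub, sub_eq_zero] at h2
      exact h2
    have hST : Sl ∘ₗ Tl = LinearMap.id := by
      apply LinearMap.ext
      intro x
      obtain ⟨p, rfl⟩ := hgs x
      simp only [LinearMap.comp_apply, LinearMap.id_apply]
      rw [hTg, hSf]
    have hTS : Tl ∘ₗ Sl = LinearMap.id := by
      apply LinearMap.ext
      intro x
      obtain ⟨p, rfl⟩ := hfs x
      simp only [LinearMap.comp_apply, LinearMap.id_apply]
      rw [hSf, hTg]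
    set Sm := LinearMap.toMatrix' Sl with hSm
    set Tm := LinearMap.toMatrix' Tl with hTm
    have hSmTm : Sm * Tm = 1 := by
      rw [hSm, hTm, ← LinearMap.toMatrix'_comp, hST, LinearMap.toMatrix'_id]
    have hTmSm : Tm * Sm = 1 := by
      rw [hSm, hTm, ← LinearMap.toMatrix'_comp, hTS, LinearMap.toMatrix'_id]
    have hunit : IsUnit Sm := ⟨⟨Sm, Tm, hSmTm, hTmSm⟩, rfl⟩
    have hinv : Sm⁻¹ = Tm := Matrix.inv_eq_right_inv hSmTm
    have hSmul : ∀ x, Sm.mulVec x = Sl x := by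
      intro x
      rw [← Matrix.toLin'_apply, hSm, Matrix.toLin'_toMatrix']
    refine ⟨Sm, hunit, fun j => ?_⟩
    have hAf : ∀ p : Fin k → MvPolynomial (Fin m) ℂ,
        (A j).mulVec (f p) = f (fun l => MvPolynomial.X j * p l) := by
      intro p
      simp only [f, LinearMap.coe_mk, AddHom.coe_mk]
      rw [mulVec_sum']
      refine Finset.sum_congr rfl fun l _ => ?_
      rw [map_mul, hφAX, ← Matrix.mulVec_mulVec]
    have hBg : ∀ p : Fin k → MvPolynomial (Fin m) ℂ,
        (B j).mulVec (g p) = g (fun l => MvPolynomial.X j * p l) := by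
      intro p
      simp only [g, LinearMap.coe_mk, AddHom.coe_mk]
      rw [mulVec_sum']
      refine Finset.sum_congr rfl fun l _ => ?_
      rw [map_mul, hφBX, ← Matrix.mulVec_mulVec]
    have heq : Sm * A j = B j * Sm := by
      apply Matrix.toLin'.injective
      apply LinearMap.ext
      intro x
      obtain ⟨p, rfl⟩ := hfs x
      simp only [Matrix.toLin'_apply]
      rw [← Matrix.mulVec_mulVec, ← Matrix.mulVec_mulVec, hAf, hSmul, hSmul, hSf, hSf, hBg]
    rw [hinv, heq, Matrix.mul_assoc, hSmTm, mul_one]
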